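/- Let E be a monotonically complete Banach lattice with the Fatou property and (T_i)_{i∈I} a mutually commuting family of positive linear contractions on E. Then the common fixed space F = {x : T_i x = x for all i} is a lattice subspace of E: every f ∈ F has a least upper bound of {f, −f} within F. -/

import Mathlib

/-- Main theorem, part (a): in a monotonically complete Banach lattice with the
Fatou property, the common fixed space `F` of a commuting family of positive linear
contractions is a lattice subspace of `E`: every `f ∈ F` admits a least upper bound
of `{f, -f}` within `F`. -/
theorem fixed_space_is_lattice_subspace
    {E : Type*} [NormedAddCommGroup E] [Lattice E] [HasSolidNorm E] [IsOrderedAddMonoid E] [NormedSpace ℝ E] [CompleteSpace E]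
    (hmc : ∀ D : Set E, D.Nonempty → DirectedOn (· ≤ ·) D → (∀ x ∈ D, 0 ≤ x) →
      (∃ C : ℝ, ∀ x ∈ D, ‖x‖ ≤ C) → ∃ b : E, IsLUB D b)
    (hfatou : ∀ (D : Set E) (b : E), D.Nonempty → DirectedOn (· ≤ ·) D →
      (∀ x ∈ D, 0 ≤ x) → IsLUB D b → ‖b‖ = ⨆ x : D, ‖(x : E)‖)
    {I : Type*} (T : I → E →L[ℝ] E)
    (hpos : ∀ i, ∀ x : E, 0 ≤ x → 0 ≤ T i x) (hcontr : ∀ i, ‖T i‖ ≤ 1)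
    (hcomm : ∀ i j, (T i).comp (T j) = (T j).comp (T i)) :
    ∀ f : E, (∀ i, T i f = f) →
      ∃ m : E, IsLeast {h : E | (∀ i, T i h = h) ∧ f ≤ h ∧ -f ≤ h} m := by
  intro f hf
  classical
  -- monotonicity of each `T i`
  have Tmono : ∀ i, ∀ x y : E, x ≤ y → T i x ≤ T i y := by
    intro i x y hxy
    have h0 : 0 ≤ T i (y - x) := hpos i (y - x) (sub_nonneg.2 hxy)
    rw [map_sub] at h0
    exact sub_nonneg.1 h0
  -- contraction estimate
  have Tnorm : ∀ i, ∀ x : E, ‖T i x‖ ≤ ‖x‖ := by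
    intro i x
    calc ‖T i x‖ ≤ ‖T i‖ * ‖x‖ := (T i).le_opNorm x
      _ ≤ 1 * ‖x‖ := mul_le_mul_of_nonneg_right (hcontr i) (norm_nonneg x)
      _ = ‖x‖ := one_mul _
  -- the auxiliary set
  set G : Set E := {x | |f| ≤ x ∧ ‖x‖ ≤ ‖f‖ ∧ (∀ i, x ≤ T i x) ∧
    ∀ h : E, (∀ i, T i h = h) → |f| ≤ h → x ≤ h} with hGdef
  have habsG : |f| ∈ G := by
    refine ⟨le_rfl, le_of_eq (norm_abs_eq_norm f), ?_, fun h _ hfh => hfh⟩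
    intro i
    have h1 : T i f ≤ T i |f| := Tmono i f |f| (le_abs_self f)
    have h2 : T i (-f) ≤ T i |f| := Tmono i (-f) |f| (neg_le_abs f)
    rw [hf i] at h1
    rw [map_neg, hf i] at h2
    exact abs_le'.2 ⟨h1, neg_le.1 (neg_le_neg h2 |>.trans_eq (neg_neg _)) |>.trans_eq rfl⟩
  -- every chain in G has an upper bound in G
  obtain ⟨m, hmax⟩ : ∃ m, Maximal (· ∈ G) m := by
    apply zorn_le₀ G
    intro c hcG hchain
    rcases c.eq_empty_or_nonempty with rfl | hcne
    · exact ⟨|f|, habsG, by simp⟩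
    have hdir : DirectedOn (· ≤ ·) c := IsChain.directedOn hchain
    have hpos' : ∀ x ∈ c, 0 ≤ x := fun x hx =>
      le_trans (abs_nonneg f) (hcG hx).1
    have hbdd : ∃ C : ℝ, ∀ x ∈ c, ‖x‖ ≤ C := ⟨‖f‖, fun x hx => (hcG hx).2.1⟩
    obtain ⟨b, hb⟩ := hmc c hcne hdir hpos' hbdd
    haveI : Nonempty c := hcne.to_subtype
    refine ⟨b, ⟨?_, ?_, ?_, ?_⟩, fun z hz => hb.1 hz⟩
    · obtain ⟨x, hx⟩ := hcne
      exact le_trans (hcG hx).1 (hb.1 hx)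
    · rw [hfatou c b hcne hdir hpos' hb]
      exact ciSup_le fun x => (hcG x.2).2.1
    · intro i
      refine hb.2 fun x hx => ?_
      exact le_trans ((hcG hx).2.2.1 i) (Tmono i x b (hb.1 hx))
    · intro h hhfix hfh
      exact hb.2 fun x hx => (hcG hx).2.2.2 h hhfix hfh
  obtain ⟨⟨habs_m, hnorm_m, hsub_m, hmin_m⟩, hmaxle⟩ := hmax
  -- m is fixed by every T i
  have hfix : ∀ i, T i m = m := by
    intro i
    have hTminG : T i m ∈ G := by
      refine ⟨le_trans habs_m (hsub_m i), le_trans (Tnorm i m) hnorm_m, ?_, ?_⟩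
      · intro j
        have := Tmono j m (T i m) (hsub_m i)
        have hcomm' : T j (T i m) = T i (T j m) := by
          have := hcomm j i
          exact DFunLike.congr_fun this m
        have h1 : T i m ≤ T i (T j m) := Tmono i m (T j m) (hsub_m j)
        rw [← hcomm'] at h1
        exact h1
      · intro h hhfix hfh
        have : T i m ≤ T i h := Tmono i m h (hmin_m h hhfix hfh)
        rwa [hhfix i] at this
    exact le_antisymm (hmaxle hTminG (hsub_m i)) (hsub_m i)
  refine ⟨m, ⟨hfix, le_trans (le_abs_self f) habs_m,
    le_trans (neg_le_abs f) habs_m⟩, ?_⟩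
  rintro h ⟨hhfix, hfh, hnfh⟩
  exact hmin_m h hhfix (abs_le'.2 ⟨hfh, hnfh⟩)
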